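/- Iteration complexity of GD with adaptive warm-up under the PL condition: if f is (H0, H1)-smooth and μ-PL, then GD with step size η_k = 1/(10H0 + 20H1(f(w_k)−f*)) achieves f(w_K) − f* ≤ ε after at most K = (40H1/μ)(f(w_0)−f*) + (20H0/μ)·log(H0/(2H1ε)) iterations. Specifically, while f(w_k)−f* ≥ H0/(2H1) the value decreases additively by at least μ/(40H1) per step, and afterwards contracts geometrically by factor (1 − μ/(20H0)) per step. -/

import Mathlib

lemma two_log_le_self {x : ℝ} (hx : 0 < x) : 2 * Real.log x ≤ x := by
  have hs : 0 < Real.sqrt x := Real.sqrt_pos.2 hx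
  have h1 : Real.log (Real.sqrt x) ≤ Real.sqrt x - 1 :=
    Real.log_le_sub_one_of_pos hs
  have h2 : Real.log (Real.sqrt x) = Real.log x / 2 := Real.log_sqrt hx.le
  have h3 : Real.sqrt x ^ 2 = x := Real.sq_sqrt hx.le
  nlinarith [sq_nonneg (Real.sqrt x - 2)]

/-- Iteration complexity of GD with adaptive warm-up under the PL condition. -/
theorem stmt_14 {d : ℕ} (f : EuclideanSpace ℝ (Fin d) → ℝ)
    (H0 H1 fstar μ ε : ℝ) (hH0 : 0 < H0) (hH1 : 0 < H1) (hμ : 0 < μ) (hε : 0 < ε)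
    (hf : ContDiff ℝ 2 f) (hfstar : IsGLB (Set.range f) fstar)
    (hs : ∀ z, ‖iteratedFDeriv ℝ 2 f z‖ ≤ H0 + H1 * (f z - fstar))
    (hPL : ∀ z, 2 * μ * (f z - fstar) ≤ ‖gradient f z‖ ^ 2)
    (w : ℕ → EuclideanSpace ℝ (Fin d)) (η : ℕ → ℝ)
    (hη : ∀ k, η k = 1 / (10 * H0 + 20 * H1 * (f (w k) - fstar)))
    (hstep : ∀ k, w (k + 1) = w k - η k • gradient f (w k))
    (hdesc : ∀ k, f (w (k + 1)) ≤ f (w k) - (η k / 2) * ‖gradient f (w k)‖ ^ 2) :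
    (∀ k, H0 / (2 * H1) ≤ f (w k) - fstar →
        f (w (k + 1)) ≤ f (w k) - μ / (40 * H1)) ∧
    (∀ k, f (w k) - fstar ≤ H0 / (2 * H1) →
        f (w (k + 1)) - fstar ≤ (1 - μ / (20 * H0)) * (f (w k) - fstar)) ∧
    (∀ K : ℕ,
      (40 * H1 / μ) * (f (w 0) - fstar)
          + (20 * H0 / μ) * Real.log (H0 / (2 * H1 * ε)) ≤ (K : ℝ) →
      f (w K) - fstar ≤ ε) := by
  obtain ⟨g, hg⟩ : ∃ g : ℕ → ℝ, g = fun k => f (w k) - fstar := ⟨_, rfl⟩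
  have hΔ : ∀ k, 0 ≤ g k := by
    intro k; simp only [hg]; exact sub_nonneg.2 (hfstar.1 ⟨w k, rfl⟩)
  have hD : ∀ k, 0 < 10 * H0 + 20 * H1 * g k := by
    intro k; have := hΔ k; nlinarith
  -- key descent inequality
  have key : ∀ k, g (k + 1) ≤ g k - μ * g k / (10 * H0 + 20 * H1 * g k) := by
    intro k
    have h1 := hdesc k
    have h2 := hPL (w k)
    rw [hη k] at h1
    have hDk := hD k
    simp only [hg] at hDk ⊢
    have e0 : (1 / (10 * H0 + 20 * H1 * (f (w k) - fstar)) / 2) * ‖gradient f (w k)‖ ^ 2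
        - μ * (f (w k) - fstar) / (10 * H0 + 20 * H1 * (f (w k) - fstar))
        = (‖gradient f (w k)‖ ^ 2 - 2 * μ * (f (w k) - fstar))
          / (2 * (10 * H0 + 20 * H1 * (f (w k) - fstar))) := by
      field_simp
    have e1 : 0 ≤ (‖gradient f (w k)‖ ^ 2 - 2 * μ * (f (w k) - fstar))
        / (2 * (10 * H0 + 20 * H1 * (f (w k) - fstar))) :=
      div_nonneg (by linarith) (by linarith)
    linarith
  have hmono : ∀ k, g (k + 1) ≤ g k := by
    intro k
    have h := key k
    have h2 : 0 ≤ μ * g k / (10 * H0 + 20 * H1 * g k) :=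
      div_nonneg (mul_nonneg hμ.le (hΔ k)) (hD k).le
    linarith
  have hanti : Antitone g := antitone_nat_of_succ_le hmono
  refine ⟨?_, ?_, ?_⟩
  · -- warm-up phase
    intro k hk
    have hDk := hD k
    have hΔk := hΔ k
    have hkey := key k
    simp only [hg] at hDk hΔk hkey
    have hkpos : 0 < f (w k) - fstar := lt_of_lt_of_le (by positivity) hk
    have hH : H0 ≤ 2 * H1 * (f (w k) - fstar) := by
      rw [div_le_iff₀ (by positivity)] at hk; linarith
    have h1 : μ / (40 * H1)
        ≤ μ * (f (w k) - fstar) / (10 * H0 + 20 * H1 * (f (w k) - fstar)) := by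
      rw [div_le_div_iff₀ (by positivity) hDk]
      nlinarith [mul_le_mul_of_nonneg_left hH hμ.le]
    linarith
  · -- geometric phase
    intro k hk
    have hDk := hD k
    have hΔk := hΔ k
    have hkey := key k
    simp only [hg] at hDk hΔk hkey
    have hH : (f (w k) - fstar) * (2 * H1) ≤ H0 := by
      rw [le_div_iff₀ (by positivity)] at hk; linarith
    have hDle : 10 * H0 + 20 * H1 * (f (w k) - fstar) ≤ 20 * H0 := by nlinarith
    have h1 : μ * (f (w k) - fstar) / (20 * H0)
        ≤ μ * (f (w k) - fstar) / (10 * H0 + 20 * H1 * (f (w k) - fstar)) :=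
      div_le_div_of_nonneg_left (mul_nonneg hμ.le hΔk) hDk hDle
    have e : (1 - μ / (20 * H0)) * (f (w k) - fstar)
        = (f (w k) - fstar) - μ * (f (w k) - fstar) / (20 * H0) := by ring
    linarith
  · -- iteration complexity
    intro K hK
    by_contra hcon
    push_neg at hcon
    have hεK : ε < g K := by simp only [hg]; exact hcon
    have hK' : (40 * H1 / μ) * g 0 + (20 * H0 / μ) * Real.log (H0 / (2 * H1 * ε))
        ≤ (K : ℝ) := by simp only [hg]; exact hK
    have hgpos : ∀ k ≤ K, ε < g k := fun k hk => lt_of_lt_of_le hεK (hanti hk)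
    obtain ⟨P, hP⟩ : ∃ P : ℕ → ℝ,
        P = fun k => (40 * H1 / μ) * g k + (20 * H0 / μ) * Real.log (g k / ε) := ⟨_, rfl⟩
    have hPstep : ∀ k < K, P (k + 1) ≤ P k - 2 := by
      intro k hk
      have ha : ε < g k := hgpos k hk.le
      have hb : ε < g (k + 1) := hgpos (k + 1) hk
      have hapos : 0 < g k := lt_trans hε ha
      have hbpos : 0 < g (k + 1) := lt_trans hε hb
      have hDk := hD k
      have hdec : μ * g k / (10 * H0 + 20 * H1 * g k) ≤ g k - g (k + 1) := by
        have := key k; linarith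
      have hmul : μ * g k ≤ (g k - g (k + 1)) * (10 * H0 + 20 * H1 * g k) := by
        rw [div_le_iff₀ hDk] at hdec; linarith
      -- log inequality
      have hlog0 : Real.log (g (k + 1) / g k) ≤ g (k + 1) / g k - 1 :=
        Real.log_le_sub_one_of_pos (by positivity)
      have hlog1 : Real.log (g (k + 1) / g k) = Real.log (g (k + 1)) - Real.log (g k) :=
        Real.log_div hbpos.ne' hapos.ne'
      have hlog2 : Real.log (g k / ε) = Real.log (g k) - Real.log ε :=
        Real.log_div hapos.ne' hε.ne'
      have hlog3 : Real.log (g (k + 1) / ε) = Real.log (g (k + 1)) - Real.log ε :=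
        Real.log_div hbpos.ne' hε.ne'
      have hfrac : g (k + 1) / g k - 1 = -((g k - g (k + 1)) / g k) := by
        field_simp
        ring
      have hlog : (g k - g (k + 1)) / g k
          ≤ Real.log (g k / ε) - Real.log (g (k + 1) / ε) := by
        rw [hlog2, hlog3]; rw [hlog1, hfrac] at hlog0; linarith
      have h3 : (20 * H0 / μ) * ((g k - g (k + 1)) / g k)
          ≤ (20 * H0 / μ) * (Real.log (g k / ε) - Real.log (g (k + 1) / ε)) :=
        mul_le_mul_of_nonneg_left hlog (by positivity)
      have heq : (40 * H1 / μ) * (g k - g (k + 1))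
            + (20 * H0 / μ) * ((g k - g (k + 1)) / g k)
          = (g k - g (k + 1)) * (2 * (10 * H0 + 20 * H1 * g k)) / (μ * g k) := by
        field_simp
        ring
      have h2 : 2 ≤ (g k - g (k + 1)) * (2 * (10 * H0 + 20 * H1 * g k)) / (μ * g k) := by
        rw [le_div_iff₀ (by positivity)]
        nlinarith
      simp only [hP]
      linarith
    have hPind : ∀ k ≤ K, P k ≤ P 0 - 2 * k := by
      intro k hk
      induction k with
      | zero => simp
      | succ n ih =>
        have h1 := hPstep n (by omega)
        have h2 := ih (by omega)
        push_cast
        push_cast at h2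
        linarith
    have hPK := hPind K le_rfl
    -- P K > 0
    have hKpos : 0 < g K := lt_trans hε hεK
    have hlogK : 0 < Real.log (g K / ε) :=
      Real.log_pos (by rw [lt_div_iff₀ hε]; linarith)
    have hPKpos : 0 < P K := by
      have h1 : 0 < (40 * H1 / μ) * g K := by positivity
      have h2 : 0 < (20 * H0 / μ) * Real.log (g K / ε) :=
        mul_pos (by positivity) hlogK
      simp only [hP]
      linarith
    -- P 0 ≤ 2 * A
    have h0pos : 0 < g 0 := lt_trans hε (hgpos 0 (Nat.zero_le K))
    have hε0 : ε < g 0 := hgpos 0 (Nat.zero_le K)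
    have hT : 0 < H0 / (2 * H1) := by positivity
    have hx : 0 < 2 * H1 * g 0 / H0 := by positivity
    have e1 : Real.log (g 0 / ε) = Real.log (g 0) - Real.log ε :=
      Real.log_div h0pos.ne' hε.ne'
    have e2 : Real.log (2 * H1 * g 0 / H0)
        = Real.log (g 0) - Real.log (H0 / (2 * H1)) := by
      rw [show 2 * H1 * g 0 / H0 = g 0 / (H0 / (2 * H1)) by field_simp]
      exact Real.log_div h0pos.ne' hT.ne'
    have e3 : Real.log (H0 / (2 * H1 * ε)) = Real.log (H0 / (2 * H1)) - Real.log ε := by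
      rw [show H0 / (2 * H1 * ε) = (H0 / (2 * H1)) / ε by field_simp]
      exact Real.log_div hT.ne' hε.ne'
    have e4 : Real.log ε ≤ Real.log (g 0) := Real.log_le_log hε hε0.le
    have h2log := two_log_le_self hx
    have hkey2 : Real.log (g 0 / ε)
        ≤ 2 * H1 * g 0 / H0 + 2 * Real.log (H0 / (2 * H1 * ε)) := by
      rw [e2] at h2log
      linarith
    have hc : (0:ℝ) < 20 * H0 / μ := by positivity
    have h5 := mul_le_mul_of_nonneg_left hkey2 hc.le
    have h7 : (20 * H0 / μ) * (2 * H1 * g 0 / H0 + 2 * Real.log (H0 / (2 * H1 * ε)))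
        = (40 * H1 / μ) * g 0
          + 2 * ((20 * H0 / μ) * Real.log (H0 / (2 * H1 * ε))) := by
      field_simp
      ring
    have hP0 : P 0 ≤ 2 * ((40 * H1 / μ) * g 0
        + (20 * H0 / μ) * Real.log (H0 / (2 * H1 * ε))) := by
      simp only [hP]
      rw [h7] at h5
      linarith
    have hfin : 2 * (K : ℝ) < P 0 := by linarith
    linarith
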